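/- Assume the partition satisfies Q_j ≍ η^{-1}B^j and λ_{jq} ≍ ηB^{-j} for j ≥ 0. Then for every p ≥ 1 there exist constants c̃_p, C̃_p > 0 (depending on p, s, B) such that for all j ≥ 0 and all q = 1, …, Q_j, c̃_p B^{j(p/2−1)} η^{p/2} ≤ ‖ψ_{jq;s}‖^p_{L^p(S¹)} ≤ C̃_p η^{p/2} B^{j(p/2−1)}. -/

import Mathlib

noncomputable section
open MeasureTheory Real

instance : Fact (0 < 2 * Real.pi) := ⟨by positivity⟩

abbrev S1 := AddCircle (2 * Real.pi)

/-- The normalized measure `ρ(dθ) = dθ/(2π)` on the circle. -/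
def rho : Measure S1 := AddCircle.haarAddCircle

/-- The weight function `w_s(x) = x^s e^{-x}`. -/
def wgt (s : ℕ) (x : ℝ) : ℝ := x ^ s * Real.exp (-x)

/-- The Mexican needlet `ψ_{jq;s}`. -/
def needlet (B : ℝ) (s : ℕ) (j : ℤ) (lam : ℝ) (xc : S1) (θ : S1) : ℂ :=
  (Real.sqrt lam : ℂ) * ∑' k : ℤ, ((wgt s ((B ^ (-j) * (k : ℝ)) ^ 2) : ℝ) : ℂ) * fourier k (θ - xc)

namespace NeedletAux

lemma pow_le_fact_mul_exp (n : ℕ) {x : ℝ} (hx : 0 ≤ x) : x ^ n ≤ n.factorial * Real.exp x := by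
  have h := Real.sum_le_exp_of_nonneg hx (n+1)
  have h2 : x ^ n / n.factorial ≤ exp x := le_trans (Finset.single_le_sum
    (f := fun i => x ^ i / i.factorial) (fun i _ => by positivity)
    (Finset.self_mem_range_succ n)) h
  rw [div_le_iff₀ (by positivity)] at h2
  calc x ^ n ≤ exp x * n.factorial := h2
  _ = _ := by ring

lemma poly_gauss (n : ℕ) (x : ℝ) :
    |x| ^ n * Real.exp (-x ^ 2) ≤ n.factorial * Real.exp 1 * Real.exp (-|x|) := by
  have h1 : |x| ^ n ≤ n.factorial * Real.exp |x| := pow_le_fact_mul_exp n (abs_nonneg x)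
  have h2 : Real.exp |x| * Real.exp (-x ^ 2) ≤ Real.exp 1 * Real.exp (-|x|) := by
    rw [← Real.exp_add, ← Real.exp_add]
    apply Real.exp_le_exp.2
    have : x ^ 2 = |x| ^ 2 := (sq_abs x).symm
    nlinarith [sq_nonneg (|x| - 1)]
  calc |x| ^ n * Real.exp (-x ^ 2) ≤ (n.factorial * Real.exp |x|) * Real.exp (-x ^ 2) :=
        mul_le_mul_of_nonneg_right h1 (Real.exp_nonneg _)
  _ = (n.factorial : ℝ) * (Real.exp |x| * Real.exp (-x ^ 2)) := by ring
  _ ≤ n.factorial * (Real.exp 1 * Real.exp (-|x|)) :=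
        mul_le_mul_of_nonneg_left h2 (by positivity)
  _ = _ := by ring

lemma exp_nat_pow (c : ℝ) (n : ℕ) : Real.exp (-(c * (n:ℝ))) = Real.exp (-c) ^ n := by
  rw [← Real.exp_nat_mul]; ring_nf

lemma summable_exp_abs {c : ℝ} (hc : 0 < c) :
    Summable (fun k : ℤ => Real.exp (-(c * |(k : ℝ)|))) := by
  have hgeo : Summable (fun n : ℕ => Real.exp (-c) ^ n) :=
    summable_geometric_of_lt_one (Real.exp_nonneg _) (Real.exp_lt_one_iff.2 (by linarith))
  apply Summable.of_nat_of_neg (f := fun k : ℤ => Real.exp (-(c * |(k : ℝ)|)))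
  · apply hgeo.congr; intro n
    rw [← exp_nat_pow]; congr 1
    simp [abs_of_nonneg]
  · apply hgeo.congr; intro n
    rw [← exp_nat_pow]; congr 1
    push_cast
    rw [abs_neg, abs_of_nonneg (by positivity)]

lemma one_sub_exp_neg {c : ℝ} (hc : 0 < c) (hc1 : c ≤ 1) : c / 3 ≤ 1 - Real.exp (-c) := by
  have h1 : c + 1 ≤ Real.exp c := Real.add_one_le_exp c
  have h2 : Real.exp c ≤ Real.exp 1 := Real.exp_le_exp.2 hc1
  have h3 : Real.exp 1 < 3 := by
    have := Real.exp_one_lt_d9; linarith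
  have h4 : Real.exp (-c) = 1 / Real.exp c := by
    rw [Real.exp_neg]; ring
  have h5 : (0:ℝ) < Real.exp c := Real.exp_pos c
  rw [h4]
  rw [le_sub_iff_add_le, div_add_div _ _ (by norm_num) h5.ne', div_le_one (by positivity)]
  nlinarith

set_option maxHeartbeats 1000000 in
lemma tsum_exp_abs_le {c : ℝ} (hc : 0 < c) (hc1 : c ≤ 1) :
    ∑' k : ℤ, Real.exp (-(c * |(k : ℝ)|)) ≤ 6 / c := by
  have hr0 : (0:ℝ) ≤ Real.exp (-c) := Real.exp_nonneg _
  have hr1 : Real.exp (-c) < 1 := Real.exp_lt_one_iff.2 (by linarith)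
  have hgeo : Summable (fun n : ℕ => Real.exp (-c) ^ n) :=
    summable_geometric_of_lt_one hr0 hr1
  have hS : ∑' n : ℕ, Real.exp (-c) ^ n = (1 - Real.exp (-c))⁻¹ :=
    tsum_geometric_of_lt_one hr0 hr1
  have e1 : (fun n : ℕ => Real.exp (-(c * |((n : ℤ) : ℝ)|))) = fun n : ℕ => Real.exp (-c) ^ n := by
    ext n; rw [← exp_nat_pow]; congr 1; simp [abs_of_nonneg]
  have e2 : (fun n : ℕ => Real.exp (-(c * |((-(n+1) : ℤ) : ℝ)|)))
      = fun n : ℕ => Real.exp (-c) ^ (n+1) := by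
    ext n; rw [← exp_nat_pow]; congr 1; push_cast
    rw [abs_neg, abs_of_nonneg (by positivity)]
  have h1 : Summable (fun n : ℕ => Real.exp (-(c * |((n : ℤ) : ℝ)|))) := by
    rw [e1]; exact hgeo
  have h2 : Summable (fun n : ℕ => Real.exp (-(c * |((-(n+1) : ℤ) : ℝ)|))) := by
    rw [e2]; exact (summable_nat_add_iff (f := fun n : ℕ => Real.exp (-c) ^ n) 1).2 hgeo
  have heq : ∑' k : ℤ, Real.exp (-(c * |(k : ℝ)|))
      = (∑' n : ℕ, Real.exp (-(c * |((n:ℤ) : ℝ)|)))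
        + ∑' n : ℕ, Real.exp (-(c * |((-(n+1):ℤ) : ℝ)|)) :=
    tsum_of_nat_of_neg_add_one h1 h2
  rw [heq]
  have k1 : ∑' n : ℕ, Real.exp (-(c * |((n : ℤ) : ℝ)|)) = (1 - Real.exp (-c))⁻¹ := by
    rw [e1, hS]
  have k2 : ∑' n : ℕ, Real.exp (-(c * |((-(n+1) : ℤ) : ℝ)|)) ≤ (1 - Real.exp (-c))⁻¹ := by
    rw [e2, ← hS]
    apply Summable.tsum_le_tsum _ ((summable_nat_add_iff (f := fun n : ℕ => Real.exp (-c) ^ n) 1).2 hgeo) hgeo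
    intro n
    exact pow_le_pow_of_le_one hr0 hr1.le (by omega)
  have hd : c / 3 ≤ 1 - Real.exp (-c) := one_sub_exp_neg hc hc1
  have hpos : (0:ℝ) < 1 - Real.exp (-c) := by linarith
  have : (1 - Real.exp (-c))⁻¹ ≤ 3 / c := by
    rw [inv_eq_one_div, div_le_div_iff₀ hpos hc]
    nlinarith
  rw [k1]
  have h6 := k2.trans this
  have h7 : (6:ℝ)/c = 3/c + 3/c := by ring
  rw [h7]
  exact add_le_add this h6

lemma sum_bound {ε : ℝ} (hε0 : 0 < ε) (hε1 : ε ≤ 1) {g : ℤ → ℝ} {C : ℝ} (hC : 0 ≤ C)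
    (hg0 : ∀ k, 0 ≤ g k) (hgb : ∀ k, g k ≤ C * Real.exp (-(ε * |(k:ℝ)|))) :
    Summable g ∧ ∑' k, g k ≤ C * 6 / ε := by
  have hsum : Summable g := Summable.of_nonneg_of_le hg0 hgb ((summable_exp_abs hε0).mul_left C)
  refine ⟨hsum, ?_⟩
  calc ∑' k, g k ≤ ∑' k : ℤ, C * Real.exp (-(ε * |(k:ℝ)|)) :=
        Summable.tsum_le_tsum hgb hsum ((summable_exp_abs hε0).mul_left C)
  _ = C * ∑' k : ℤ, Real.exp (-(ε * |(k:ℝ)|)) := tsum_mul_left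
  _ ≤ C * (6 / ε) := mul_le_mul_of_nonneg_left (tsum_exp_abs_le hε0 hε1) hC
  _ = C * 6 / ε := by ring

noncomputable def F (m : ℕ) (x : ℝ) : ℝ := x ^ (m+2) * Real.exp (-x^2)
noncomputable def F1 (m : ℕ) (x : ℝ) : ℝ := (((m:ℝ)+2) * x ^ (m+1) - 2 * x ^ (m+3)) * Real.exp (-x^2)
noncomputable def F2 (m : ℕ) (x : ℝ) : ℝ :=
  (((m:ℝ)+2)*((m:ℝ)+1) * x ^ m - (4*(m:ℝ)+10) * x ^ (m+2) + 4 * x ^ (m+4)) * Real.exp (-x^2)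

/-- the exponential-decay constant for `F2` -/
noncomputable def C2 (m : ℕ) : ℝ :=
  (((m:ℝ)+2)*((m:ℝ)+1) * m.factorial + (4*(m:ℝ)+10) * (m+2).factorial + 4 * (m+4).factorial)
    * Real.exp 1

lemma C2_pos (m : ℕ) : 0 < C2 m := by
  unfold C2; positivity

lemma hasDerivAt_gauss (x : ℝ) :
    HasDerivAt (fun x : ℝ => Real.exp (-x^2)) (-(2*x) * Real.exp (-x^2)) x := by
  have h : HasDerivAt (fun x : ℝ => -x^2) (-(2*x)) x := by
    simpa using ((hasDerivAt_pow 2 x).fun_neg)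
  simpa [mul_comm] using h.exp

lemma hasDerivAt_F (m : ℕ) (x : ℝ) : HasDerivAt (F m) (F1 m x) x := by
  have h := (hasDerivAt_pow (m+2) x).fun_mul (hasDerivAt_gauss x)
  refine h.congr_deriv ?_
  unfold F1
  push_cast
  ring

lemma hasDerivAt_F1 (m : ℕ) (x : ℝ) : HasDerivAt (F1 m) (F2 m x) x := by
  have hp : HasDerivAt (fun x : ℝ => ((m:ℝ)+2) * x ^ (m+1) - 2 * x ^ (m+3))
      (((m:ℝ)+2)*((m:ℝ)+1) * x ^ m - 2*((m:ℝ)+3) * x ^ (m+2)) x := by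
    have h1 := (hasDerivAt_pow (m+1) x).const_mul ((m:ℝ)+2)
    have h2 := (hasDerivAt_pow (m+3) x).const_mul (2:ℝ)
    refine (h1.fun_sub h2).congr_deriv ?_
    push_cast
    ring
  have h := hp.fun_mul (hasDerivAt_gauss x)
  refine h.congr_deriv ?_
  unfold F2
  push_cast
  ring

lemma abs_F2_le (m : ℕ) (x : ℝ) : |F2 m x| ≤ C2 m * Real.exp (-|x|) := by
  have e0 : (0:ℝ) ≤ Real.exp (-x^2) := Real.exp_nonneg _
  have hm0 : (0:ℝ) ≤ (m:ℝ)+2 := by positivity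
  have habs : |F2 m x| ≤ (((m:ℝ)+2)*((m:ℝ)+1) * |x| ^ m + (4*(m:ℝ)+10) * |x| ^ (m+2)
      + 4 * |x| ^ (m+4)) * Real.exp (-x^2) := by
    unfold F2
    rw [abs_mul, abs_of_nonneg e0]
    apply mul_le_mul_of_nonneg_right _ e0
    have t1 := abs_add_le (((m:ℝ)+2)*((m:ℝ)+1) * x ^ m - (4*(m:ℝ)+10) * x ^ (m+2)) (4 * x ^ (m+4))
    have t2 := abs_sub (((m:ℝ)+2)*((m:ℝ)+1) * x ^ m) ((4*(m:ℝ)+10) * x ^ (m+2))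
    have e1 : |((m:ℝ)+2)*((m:ℝ)+1) * x ^ m| = ((m:ℝ)+2)*((m:ℝ)+1) * |x| ^ m := by
      rw [abs_mul, abs_pow, abs_of_nonneg (by positivity)]
    have e2 : |(4*(m:ℝ)+10) * x ^ (m+2)| = (4*(m:ℝ)+10) * |x| ^ (m+2) := by
      rw [abs_mul, abs_pow, abs_of_nonneg (by positivity)]
    have e3 : |(4:ℝ) * x ^ (m+4)| = 4 * |x| ^ (m+4) := by
      rw [abs_mul, abs_pow, abs_of_nonneg (by norm_num)]
    rw [e1, e2] at t2
    rw [e3] at t1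
    linarith
  refine habs.trans ?_
  have b0 := poly_gauss m x
  have b2 := poly_gauss (m+2) x
  have b4 := poly_gauss (m+4) x
  unfold C2
  have hexp : (0:ℝ) ≤ Real.exp (-|x|) := Real.exp_nonneg _
  nlinarith [mul_le_mul_of_nonneg_left b0 (by positivity : (0:ℝ) ≤ ((m:ℝ)+2)*((m:ℝ)+1)),
    mul_le_mul_of_nonneg_left b2 (by positivity : (0:ℝ) ≤ 4*(m:ℝ)+10),
    mul_le_mul_of_nonneg_left b4 (by norm_num : (0:ℝ) ≤ (4:ℝ))]

/-- Mean-value second-difference estimate. -/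
lemma second_diff_bound {F F1 F2 : ℝ → ℝ} (hF : ∀ x, HasDerivAt F (F1 x) x)
    (hF1 : ∀ x, HasDerivAt F1 (F2 x) x) {M h x : ℝ} (hh : 0 ≤ h)
    (hM : ∀ y ∈ Set.Icc (x - h) (x + h), |F2 y| ≤ M) :
    |F (x + h) - 2 * F x + F (x - h)| ≤ 2 * M * h ^ 2 := by
  have hM0 : 0 ≤ M := le_trans (abs_nonneg _) (hM x (by constructor <;> linarith))
  set φ : ℝ → ℝ := fun t => F (x + t) + F (x - t)
  have hφ : ∀ t : ℝ, HasDerivAt φ (F1 (x + t) - F1 (x - t)) t := by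
    intro t
    have h1 : HasDerivAt (fun t : ℝ => F (x + t)) (F1 (x + t)) t := by
      exact (hF (x + t)).comp_const_add x t
    have h2 : HasDerivAt (fun t : ℝ => F (x - t)) (-F1 (x - t)) t := by
      have hi : HasDerivAt (fun t : ℝ => x - t) (-1) t := by
        simpa using ((hasDerivAt_id t).const_sub x)
      exact (hF (x - t)).comp_const_sub x t
    exact (h1.fun_add h2).congr_deriv (by ring)
  -- step 1 : |F1 (x+t) - F1 (x-t)| ≤ 2*M*h for t ∈ [0,h]
  have step1 : ∀ t ∈ Set.Icc (0:ℝ) h, |F1 (x + t) - F1 (x - t)| ≤ M * (2 * h) := by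
    intro t ht
    obtain ⟨ht0, hth⟩ := ht
    have hmem1 : x - t ∈ Set.Icc (x - h) (x + h) := Set.mem_Icc.2 ⟨by linarith, by linarith⟩
    have hmem2 : x + t ∈ Set.Icc (x - h) (x + h) := Set.mem_Icc.2 ⟨by linarith, by linarith⟩
    have key := Convex.norm_image_sub_le_of_norm_hasDerivWithin_le
      (f := F1) (f' := F2) (C := M)
      (fun y hy => (hF1 y).hasDerivWithinAt) (fun y hy => by
        rw [Real.norm_eq_abs]; exact hM y hy)
      (convex_Icc _ _) hmem1 hmem2
    rw [Real.norm_eq_abs] at key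
    calc |F1 (x + t) - F1 (x - t)| ≤ M * ‖(x + t) - (x - t)‖ := key
      _ = M * |2 * t| := by rw [Real.norm_eq_abs]; congr 1; ring
      _ ≤ M * (2 * h) := by
          apply mul_le_mul_of_nonneg_left _ hM0
          rw [abs_of_nonneg (by linarith : (0:ℝ) ≤ 2 * t)]
          linarith
  -- step 2 : apply MVT to φ on [0, h]
  have key2 := Convex.norm_image_sub_le_of_norm_hasDerivWithin_le
    (f := φ) (f' := fun t => F1 (x + t) - F1 (x - t)) (C := M * (2*h))
    (fun y hy => (hφ y).hasDerivWithinAt) (fun y hy => by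
      rw [Real.norm_eq_abs]; exact step1 y hy)
    (convex_Icc _ _) (Set.left_mem_Icc.2 hh) (Set.right_mem_Icc.2 hh)
  rw [Real.norm_eq_abs, Real.norm_eq_abs] at key2
  have : φ h - φ 0 = F (x + h) - 2 * F x + F (x - h) := by
    simp only [φ]
    ring_nf
  rw [this] at key2
  calc |F (x + h) - 2 * F x + F (x - h)| ≤ M * (2*h) * |h - 0| := key2
    _ = 2 * M * (h * |h|) := by ring_nf
    _ = 2 * M * h ^ 2 := by rw [abs_of_nonneg hh]; ring
  

section Coef

variable (s : ℕ) (ε : ℝ)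

/-- needlet coefficient -/
noncomputable def coefA (s : ℕ) (ε : ℝ) (k : ℤ) : ℝ :=
  ((ε * k) ^ 2) ^ s * Real.exp (-((ε * k) ^ 2))

noncomputable def CA (s : ℕ) : ℝ := (2*s).factorial * Real.exp 1

lemma coefA_nonneg (k : ℤ) : 0 ≤ coefA s ε k := by unfold coefA; positivity

lemma CA_pos : 0 < CA s := by unfold CA; positivity

lemma pow_even_abs (k : ℤ) : (ε * (k:ℝ)) ^ (2*s) = (ε * |(k:ℝ)|) ^ (2*s) := by
  have h : (0:ℝ) ≤ (k:ℝ) ^ (2*s) := Even.pow_nonneg ⟨s, two_mul s⟩ _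
  rw [mul_pow, mul_pow, ← abs_pow, abs_of_nonneg h]

lemma coefA_eq_F (hs : 1 ≤ s) (k : ℤ) : coefA s ε k = F (2*s-2) (ε * k) := by
  unfold coefA F
  have h : 2*s - 2 + 2 = 2*s := by omega
  rw [h, ← pow_mul]

lemma coefA_le (hε0 : 0 < ε) (k : ℤ) :
    coefA s ε k ≤ CA s * Real.exp (-(ε * |(k:ℝ)|)) := by
  have h1 : coefA s ε k = (ε * |(k:ℝ)|) ^ (2*s) * Real.exp (-(ε*k)^2) := by
    unfold coefA
    rw [← pow_mul, pow_even_abs]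
  rw [h1]
  have h2 := poly_gauss (2*s) (ε * k)
  have h3 : |ε * (k:ℝ)| = ε * |(k:ℝ)| := by
    rw [abs_mul, abs_of_pos hε0]
  rw [h3] at h2
  unfold CA
  exact h2

lemma coefA_mul_abs_le (hε0 : 0 < ε) (k : ℤ) :
    coefA s ε k * (ε * |(k:ℝ)|) ≤ (2*s+1).factorial * Real.exp 1 * Real.exp (-(ε * |(k:ℝ)|)) := by
  have h1 : coefA s ε k * (ε * |(k:ℝ)|) = (ε * |(k:ℝ)|) ^ (2*s+1) * Real.exp (-(ε*k)^2) := by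
    have : coefA s ε k = (ε * |(k:ℝ)|) ^ (2*s) * Real.exp (-(ε*k)^2) := by
      unfold coefA
      rw [← pow_mul, pow_even_abs]
    rw [this, pow_succ]
    ring
  rw [h1]
  have h2 := poly_gauss (2*s+1) (ε * k)
  have h3 : |ε * (k:ℝ)| = ε * |(k:ℝ)| := by rw [abs_mul, abs_of_pos hε0]
  rw [h3] at h2
  exact h2

lemma summable_coefA (hε0 : 0 < ε) (hε1 : ε ≤ 1) : Summable (coefA s ε) :=
  (sum_bound hε0 hε1 (CA_pos s).le (coefA_nonneg s ε) (coefA_le s ε hε0)).1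

lemma tsum_coefA_le (hε0 : 0 < ε) (hε1 : ε ≤ 1) : ∑' k, coefA s ε k ≤ CA s * 6 / ε :=
  (sum_bound hε0 hε1 (CA_pos s).le (coefA_nonneg s ε) (coefA_le s ε hε0)).2

/-- weighted sums: `∑ a_k |k| ≤ CW/ε²` -/
noncomputable def CW (s : ℕ) : ℝ := (2*s+1).factorial * Real.exp 1 * 6

lemma summable_coefA_abs (hε0 : 0 < ε) (hε1 : ε ≤ 1) :
    Summable (fun k : ℤ => coefA s ε k * |(k:ℝ)|) := by
  have := (sum_bound hε0 hε1 (C := (2*s+1).factorial * Real.exp 1 / ε) (div_pos (mul_pos (by exact_mod_cast Nat.factorial_pos _) (Real.exp_pos 1)) hε0).le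
    (g := fun k : ℤ => coefA s ε k * |(k:ℝ)|) (fun k => mul_nonneg (coefA_nonneg s ε k) (abs_nonneg _)) (fun k => ?_)).1
  · exact this
  · have h := coefA_mul_abs_le s ε hε0 k
    rw [div_mul_eq_mul_div, le_div_iff₀ hε0]
    calc coefA s ε k * |(k:ℝ)| * ε = coefA s ε k * (ε * |(k:ℝ)|) := by ring
    _ ≤ _ := h

lemma tsum_coefA_abs_le (hε0 : 0 < ε) (hε1 : ε ≤ 1) :
    ∑' k : ℤ, coefA s ε k * |(k:ℝ)| ≤ CW s / ε ^ 2 := by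
  have h := (sum_bound hε0 hε1 (C := (2*s+1).factorial * Real.exp 1 / ε) (div_pos (mul_pos (by exact_mod_cast Nat.factorial_pos _) (Real.exp_pos 1)) hε0).le
    (g := fun k : ℤ => coefA s ε k * |(k:ℝ)|) (fun k => mul_nonneg (coefA_nonneg s ε k) (abs_nonneg _)) (fun k => ?_)).2
  · refine h.trans (le_of_eq ?_)
    unfold CW
    field_simp
  · have h := coefA_mul_abs_le s ε hε0 k
    rw [div_mul_eq_mul_div, le_div_iff₀ hε0]
    calc coefA s ε k * |(k:ℝ)| * ε = coefA s ε k * (ε * |(k:ℝ)|) := by ring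
    _ ≤ _ := h

/-- Lower bound for `∑ a_k`. -/
lemma tsum_coefA_ge (hs : 1 ≤ s) (hε0 : 0 < ε) (hε1 : ε ≤ 1) :
    Real.exp (-9) / ε ≤ ∑' k, coefA s ε k := by
  set n₀ : ℕ := ⌈1/ε⌉₊ with hn₀
  set M : ℕ := ⌊1/ε⌋₊ with hM
  have hval : ∀ k ∈ Finset.Icc (n₀ : ℤ) (n₀ + M), Real.exp (-9) ≤ coefA s ε k := by
    intro k hk
    rw [Finset.mem_Icc] at hk
    have hk1 : 1 ≤ ε * (k:ℝ) := by
      have : (1:ℝ)/ε ≤ n₀ := Nat.le_ceil _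
      have hkn : (n₀:ℝ) ≤ (k:ℝ) := by exact_mod_cast hk.1
      calc (1:ℝ) = ε * (1/ε) := by field_simp
      _ ≤ ε * n₀ := by apply mul_le_mul_of_nonneg_left this hε0.le
      _ ≤ ε * k := mul_le_mul_of_nonneg_left hkn hε0.le
    have hk3 : ε * (k:ℝ) ≤ 3 := by
      have h1 : (M:ℝ) ≤ 1/ε := Nat.floor_le (by positivity)
      have h2 : (n₀:ℝ) ≤ 1/ε + 1 := (Nat.ceil_lt_add_one (by positivity)).le
      have hkn : (k:ℝ) ≤ (n₀:ℝ) + M := by exact_mod_cast hk.2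
      have : ε * (k:ℝ) ≤ ε * ((1/ε + 1) + 1/ε) := by
        apply mul_le_mul_of_nonneg_left _ hε0.le
        linarith
      calc ε * (k:ℝ) ≤ ε * ((1/ε + 1) + 1/ε) := this
        _ = 2 + ε := by field_simp; ring
        _ ≤ 3 := by linarith
    unfold coefA
    have hp : (1:ℝ) ≤ ((ε * k)^2)^s := by
      apply one_le_pow₀
      nlinarith
    have he : Real.exp (-9) ≤ Real.exp (-((ε*k)^2)) := by
      apply Real.exp_le_exp.2
      nlinarith
    calc Real.exp (-9) = 1 * Real.exp (-9) := (one_mul _).symm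
    _ ≤ ((ε * k)^2)^s * Real.exp (-((ε*k)^2)) := by
        apply mul_le_mul hp he (Real.exp_nonneg _) (by positivity)
  have hcount : (1:ℝ)/ε ≤ (Finset.Icc (n₀ : ℤ) (n₀ + M)).card := by
    rw [Int.card_Icc]
    have : ((n₀ : ℤ) + M + 1 - n₀) = (M + 1 : ℤ) := by ring
    rw [this]
    have h1 : (1:ℝ)/ε < M + 1 := Nat.lt_floor_add_one _
    have : ((M+1 : ℤ).toNat : ℝ) = (M:ℝ) + 1 := by
      norm_num
    rw [this]
    linarith
  have hsum : ∑ k ∈ Finset.Icc (n₀ : ℤ) (n₀ + M), coefA s ε k ≤ ∑' k, coefA s ε k :=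
    Summable.sum_le_tsum _ (fun k _ => coefA_nonneg s ε k) (summable_coefA s ε hε0 hε1)
  calc Real.exp (-9) / ε = (1/ε) * Real.exp (-9) := by ring
  _ ≤ (Finset.Icc (n₀ : ℤ) (n₀ + M)).card * Real.exp (-9) := by
      apply mul_le_mul_of_nonneg_right hcount (Real.exp_nonneg _)
  _ = ∑ k ∈ Finset.Icc (n₀ : ℤ) (n₀ + M), Real.exp (-9) := by
      rw [Finset.sum_const, nsmul_eq_mul]
  _ ≤ ∑ k ∈ Finset.Icc (n₀ : ℤ) (n₀ + M), coefA s ε k := Finset.sum_le_sum hval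
  _ ≤ _ := hsum

/-- second difference coefficient -/
noncomputable def coefB (s : ℕ) (ε : ℝ) (k : ℤ) : ℝ :=
  2 * coefA s ε k - coefA s ε (k-1) - coefA s ε (k+1)

lemma abs_coefB_le (hs : 1 ≤ s) (hε0 : 0 < ε) (hε1 : ε ≤ 1) (k : ℤ) :
    |coefB s ε k| ≤ 2 * (C2 (2*s-2) * Real.exp 1) * ε^2 * Real.exp (-(ε * |(k:ℝ)|)) := by
  have hx : coefB s ε k = -(F (2*s-2) (ε*k + ε) - 2 * F (2*s-2) (ε*k) + F (2*s-2) (ε*k - ε)) := by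
    unfold coefB
    rw [coefA_eq_F s ε hs k, coefA_eq_F s ε hs (k-1), coefA_eq_F s ε hs (k+1)]
    push_cast
    ring_nf
  rw [hx, abs_neg]
  have hM : ∀ y ∈ Set.Icc (ε*k - ε) (ε*k + ε),
      |F2 (2*s-2) y| ≤ (C2 (2*s-2) * Real.exp 1) * Real.exp (-(ε * |(k:ℝ)|)) := by
    intro y hy
    refine (abs_F2_le (2*s-2) y).trans ?_
    rw [mul_assoc, ← Real.exp_add]
    apply mul_le_mul_of_nonneg_left _ (C2_pos (2*s-2)).le
    apply Real.exp_le_exp.2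
    obtain ⟨hy1, hy2⟩ := hy
    have h1 : |ε * (k:ℝ)| ≤ ε + |y| := by
      calc |ε * (k:ℝ)| = |(ε * (k:ℝ) - y) + y| := by ring_nf
      _ ≤ |ε * (k:ℝ) - y| + |y| := abs_add_le _ _
      _ ≤ ε + |y| := by
          refine add_le_add_left ?_ _
          rw [abs_le]
          exact ⟨by linarith, by linarith⟩
    have h2 : ε * |(k:ℝ)| = |ε * (k:ℝ)| := by rw [abs_mul, abs_of_pos hε0]
    linarith
  have := second_diff_bound (hasDerivAt_F (2*s-2)) (hasDerivAt_F1 (2*s-2)) hε0.le hM (x := ε*k)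
  calc |F (2*s-2) (ε*k + ε) - 2 * F (2*s-2) (ε*k) + F (2*s-2) (ε*k - ε)|
      ≤ 2 * ((C2 (2*s-2) * Real.exp 1) * Real.exp (-(ε * |(k:ℝ)|))) * ε^2 := this
  _ = _ := by ring

end Coef


section Kernel

open Complex in
/-- The needlet kernel as a function on `ℝ`. -/
noncomputable def Ker (s : ℕ) (ε : ℝ) (x : ℝ) : ℂ :=
  ∑' k : ℤ, (coefA s ε k : ℂ) * Complex.exp ((((k : ℝ) * x : ℝ)) * Complex.I)

variable (s : ℕ) (ε : ℝ)

lemma norm_term (x : ℝ) (k : ℤ) :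
    ‖(coefA s ε k : ℂ) * Complex.exp ((((k : ℝ) * x : ℝ)) * Complex.I)‖ = coefA s ε k := by
  rw [norm_mul, Complex.norm_exp_ofReal_mul_I, mul_one, Complex.norm_real,
    Real.norm_eq_abs, abs_of_nonneg (coefA_nonneg s ε k)]

lemma summable_term (hε0 : 0 < ε) (hε1 : ε ≤ 1) (x : ℝ) :
    Summable (fun k : ℤ => (coefA s ε k : ℂ) * Complex.exp ((((k : ℝ) * x : ℝ)) * Complex.I)) := by
  apply Summable.of_norm
  apply (summable_coefA s ε hε0 hε1).congr
  intro k
  exact (norm_term s ε x k).symm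

lemma Ker_norm_le (hε0 : 0 < ε) (hε1 : ε ≤ 1) (x : ℝ) :
    ‖Ker s ε x‖ ≤ CA s * 6 / ε := by
  refine (norm_tsum_le_tsum_norm ?_).trans ?_
  · apply (summable_coefA s ε hε0 hε1).congr
    intro k
    exact (norm_term s ε x k).symm
  · calc ∑' k : ℤ, ‖(coefA s ε k : ℂ) * Complex.exp ((((k : ℝ) * x : ℝ)) * Complex.I)‖
        = ∑' k : ℤ, coefA s ε k := by
          congr 1; funext k; exact norm_term s ε x k
    _ ≤ CA s * 6 / ε := tsum_coefA_le s ε hε0 hε1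

lemma Ker_continuous (hε0 : 0 < ε) (hε1 : ε ≤ 1) : Continuous (Ker s ε) := by
  apply continuous_tsum
  · intro k
    apply Continuous.mul continuous_const
    apply Complex.continuous_exp.comp
    apply Continuous.mul _ continuous_const
    exact Complex.continuous_ofReal.comp (continuous_const.mul continuous_id)
  · exact summable_coefA s ε hε0 hε1
  · intro k x
    exact le_of_eq (norm_term s ε x k)

lemma one_sub_abs_le_cos (t : ℝ) : 1 - |t| ≤ Real.cos t := by
  have h : Real.cos t = 1 - 2 * Real.sin (t/2) ^ 2 := by
    have h2 := Real.cos_two_mul' (t/2)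
    rw [show 2*(t/2) = t by ring] at h2
    rw [h2]
    nlinarith [Real.sin_sq_add_cos_sq (t/2)]
  rw [h]
  have h1 : |Real.sin (t/2)| ≤ |t/2| := Real.abs_sin_le_abs
  have h2 : |Real.sin (t/2)| ≤ 1 := abs_le.2 ⟨Real.neg_one_le_sin _, Real.sin_le_one _⟩
  have h3 : |t/2| = |t|/2 := by rw [abs_div]; norm_num
  nlinarith [sq_abs (Real.sin (t/2)), abs_nonneg (Real.sin (t/2))]

/-- lower bound on the kernel near `0`. -/
lemma Ker_re_ge (hε0 : 0 < ε) (hε1 : ε ≤ 1) (x : ℝ) :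
    (∑' k, coefA s ε k) - |x| * (CW s / ε ^ 2) ≤ ‖Ker s ε x‖ := by
  have hsummC := summable_term s ε hε0 hε1 x
  have hre : (Ker s ε x).re = ∑' k : ℤ, coefA s ε k * Real.cos ((k : ℝ) * x) := by
    rw [Ker, Complex.re_tsum hsummC]
    congr 1; funext k
    rw [Complex.re_ofReal_mul, Complex.exp_ofReal_mul_I_re]
  have hA := summable_coefA s ε hε0 hε1
  have hW := summable_coefA_abs s ε hε0 hε1
  have hWx : Summable (fun k : ℤ => coefA s ε k * |(k:ℝ)| * |x|) := hW.mul_right _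
  have hcos : Summable (fun k : ℤ => coefA s ε k * Real.cos ((k : ℝ) * x)) := by
    apply Summable.of_abs
    apply Summable.of_nonneg_of_le (fun k => abs_nonneg _) _ hA
    intro k
    rw [abs_mul, abs_of_nonneg (coefA_nonneg s ε k)]
    have := abs_le.2 ⟨Real.neg_one_le_cos _, Real.cos_le_one ((k:ℝ)*x)⟩
    calc coefA s ε k * |Real.cos ((k:ℝ)*x)| ≤ coefA s ε k * 1 :=
      mul_le_mul_of_nonneg_left this (coefA_nonneg s ε k)
    _ = coefA s ε k := mul_one _
  have hpt : ∀ k : ℤ, coefA s ε k - coefA s ε k * |(k:ℝ)| * |x|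
      ≤ coefA s ε k * Real.cos ((k : ℝ) * x) := by
    intro k
    have hc := one_sub_abs_le_cos ((k:ℝ) * x)
    have := mul_le_mul_of_nonneg_left hc (coefA_nonneg s ε k)
    calc coefA s ε k - coefA s ε k * |(k:ℝ)| * |x|
        = coefA s ε k * (1 - |(k:ℝ) * x|) := by rw [abs_mul]; ring
    _ ≤ coefA s ε k * Real.cos ((k:ℝ)*x) := this
  have hsum_le : (∑' k, coefA s ε k) - (∑' k : ℤ, coefA s ε k * |(k:ℝ)|) * |x|
      ≤ ∑' k : ℤ, coefA s ε k * Real.cos ((k : ℝ) * x) := by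
    have := Summable.tsum_le_tsum hpt (hA.sub hWx) hcos
    rw [Summable.tsum_sub hA hWx, tsum_mul_right] at this
    exact this
  have hWle : (∑' k : ℤ, coefA s ε k * |(k:ℝ)|) * |x| ≤ (CW s / ε^2) * |x| :=
    mul_le_mul_of_nonneg_right (tsum_coefA_abs_le s ε hε0 hε1) (abs_nonneg _)
  have hfin : (Ker s ε x).re ≤ ‖Ker s ε x‖ := Complex.re_le_norm _
  rw [hre] at hfin
  linarith

/-- The crucial decay estimate: `(2 - 2cos x)·‖K(x)‖ ≤ 12·C2·e·ε`. -/
lemma Ker_decay (hs : 1 ≤ s) (hε0 : 0 < ε) (hε1 : ε ≤ 1) (x : ℝ) :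
    (2 - 2 * Real.cos x) * ‖Ker s ε x‖ ≤ 12 * (C2 (2*s-2) * Real.exp 1) * ε := by
  set e₁ : ℤ ≃ ℤ := Equiv.addRight (1:ℤ)
  set e₂ : ℤ ≃ ℤ := Equiv.subRight (1:ℤ)
  have hsummC := summable_term s ε hε0 hε1 x
  have hK : HasSum (fun k : ℤ => (coefA s ε k : ℂ) * Complex.exp ((((k : ℝ) * x : ℝ)) * Complex.I))
      (Ker s ε x) := hsummC.hasSum
  -- sum with coefficients shifted down (a_{k-1})
  set g : ℤ → ℂ := fun k => (coefA s ε (k-1) : ℂ) * Complex.exp ((((k : ℝ) * x : ℝ)) * Complex.I)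
    with hg
  set h : ℤ → ℂ := fun k => (coefA s ε (k+1) : ℂ) * Complex.exp ((((k : ℝ) * x : ℝ)) * Complex.I)
    with hh
  have hgsum : HasSum g (Complex.exp ((x:ℝ) * Complex.I) * Ker s ε x) := by
    have h1 : HasSum (fun k : ℤ => Complex.exp ((x:ℝ) * Complex.I) *
        ((coefA s ε k : ℂ) * Complex.exp ((((k : ℝ) * x : ℝ)) * Complex.I)))
        (Complex.exp ((x:ℝ) * Complex.I) * Ker s ε x) := hK.mul_left _
    have h2 : (fun k : ℤ => Complex.exp ((x:ℝ) * Complex.I) *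
        ((coefA s ε k : ℂ) * Complex.exp ((((k : ℝ) * x : ℝ)) * Complex.I))) = g ∘ e₁ := by
      funext k
      simp only [hg, Function.comp, e₁, Equiv.coe_addRight, add_sub_cancel_right]
      rw [mul_left_comm, ← Complex.exp_add]
      congr 2
      push_cast
      ring
    rw [h2] at h1
    exact e₁.hasSum_iff.1 h1
  have hhsum : HasSum h (Complex.exp (((-x : ℝ)) * Complex.I) * Ker s ε x) := by
    have h1 : HasSum (fun k : ℤ => Complex.exp (((-x:ℝ)) * Complex.I) *
        ((coefA s ε k : ℂ) * Complex.exp ((((k : ℝ) * x : ℝ)) * Complex.I)))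
        (Complex.exp (((-x:ℝ)) * Complex.I) * Ker s ε x) := hK.mul_left _
    have h2 : (fun k : ℤ => Complex.exp (((-x:ℝ)) * Complex.I) *
        ((coefA s ε k : ℂ) * Complex.exp ((((k : ℝ) * x : ℝ)) * Complex.I))) = h ∘ e₂ := by
      funext k
      simp only [hh, Function.comp, e₂, Equiv.subRight_apply, sub_add_cancel]
      rw [mul_left_comm, ← Complex.exp_add]
      congr 2
      push_cast
      ring
    rw [h2] at h1
    exact e₂.hasSum_iff.1 h1
  have hB : HasSum (fun k : ℤ => (coefB s ε k : ℂ) * Complex.exp ((((k : ℝ) * x : ℝ)) * Complex.I))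
      ((2 - Complex.exp ((x:ℝ) * Complex.I) - Complex.exp (((-x:ℝ)) * Complex.I)) * Ker s ε x) := by
    have h1 := ((hK.mul_left 2).sub hgsum).sub hhsum
    have h2 : (fun k : ℤ => 2 * ((coefA s ε k : ℂ) * Complex.exp ((((k : ℝ) * x : ℝ)) * Complex.I))
        - g k - h k)
        = fun k : ℤ => (coefB s ε k : ℂ) * Complex.exp ((((k : ℝ) * x : ℝ)) * Complex.I) := by
      funext k
      simp only [hg, hh, coefB]
      push_cast
      ring
    rw [h2] at h1
    rw [show (2 - Complex.exp ((x:ℝ) * Complex.I) - Complex.exp (((-x:ℝ)) * Complex.I)) * Ker s ε x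
      = 2 * Ker s ε x - Complex.exp ((x:ℝ) * Complex.I) * Ker s ε x
        - Complex.exp (((-x:ℝ)) * Complex.I) * Ker s ε x by ring]
    exact h1
  -- identify the prefactor with `2 - 2cos x`
  have hpre : ((2 - 2 * Real.cos x : ℝ) : ℂ)
      = 2 - Complex.exp ((x:ℝ) * Complex.I) - Complex.exp (((-x:ℝ)) * Complex.I) := by
    rw [Complex.exp_mul_I, Complex.exp_mul_I, ← Complex.ofReal_cos, ← Complex.ofReal_sin,
      ← Complex.ofReal_cos, ← Complex.ofReal_sin, Real.cos_neg, Real.sin_neg]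
    push_cast
    ring
  -- summability of |coefB|
  have hBabs : Summable (fun k : ℤ => |coefB s ε k|) ∧
      ∑' k : ℤ, |coefB s ε k| ≤ (2 * (C2 (2*s-2) * Real.exp 1) * ε^2) * 6 / ε := by
    apply sum_bound hε0 hε1 _ (fun k => abs_nonneg _) (fun k => abs_coefB_le s ε hs hε0 hε1 k)
    have := C2_pos (2*s-2)
    positivity
  have hnorm : ‖((2 - 2 * Real.cos x : ℝ) : ℂ) * Ker s ε x‖ ≤ ∑' k : ℤ, |coefB s ε k| := by
    rw [hpre]
    rw [← hB.tsum_eq]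
    refine (norm_tsum_le_tsum_norm ?_).trans ?_
    · apply hBabs.1.congr
      intro k
      rw [norm_mul, Complex.norm_exp_ofReal_mul_I, mul_one, Complex.norm_real, Real.norm_eq_abs]
    · apply le_of_eq
      congr 1; funext k
      rw [norm_mul, Complex.norm_exp_ofReal_mul_I, mul_one, Complex.norm_real, Real.norm_eq_abs]
  have hfac : ‖((2 - 2 * Real.cos x : ℝ) : ℂ) * Ker s ε x‖
      = (2 - 2 * Real.cos x) * ‖Ker s ε x‖ := by
    rw [norm_mul, Complex.norm_real, Real.norm_eq_abs,
      abs_of_nonneg (by nlinarith [Real.cos_le_one x] : (0:ℝ) ≤ 2 - 2 * Real.cos x)]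
  rw [hfac] at hnorm
  refine hnorm.trans ?_
  refine hBabs.2.trans (le_of_eq ?_)
  field_simp
  ring

end Kernel


section PtBounds

variable (s : ℕ) (ε : ℝ)

noncomputable def DU (s : ℕ) : ℝ := CA s * 6
noncomputable def DV (s : ℕ) : ℝ := 3 * Real.pi^2 * (C2 (2*s-2) * Real.exp 1)
noncomputable def del (s : ℕ) : ℝ := Real.exp (-9) / (2 * CW s)

lemma CW_pos : 0 < CW s := by unfold CW; positivity
lemma DU_pos : 0 < DU s := by unfold DU; have := CA_pos s; positivity
lemma DV_pos : 0 < DV s := by unfold DV; have := C2_pos (2*s-2); positivity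
lemma del_pos : 0 < del s := by unfold del; have := CW_pos s; positivity

lemma CW_ge_six : 6 ≤ CW s := by
  unfold CW
  have h1 : (1:ℝ) ≤ (2*s+1).factorial := by exact_mod_cast Nat.one_le_iff_ne_zero.2 (Nat.factorial_pos _).ne'
  nlinarith [Real.one_le_exp (by norm_num : (0:ℝ) ≤ 1)]

lemma del_le : del s ≤ 12⁻¹ := by
  unfold del
  have h1 : Real.exp (-9) ≤ 1 := Real.exp_le_one_iff.2 (by norm_num)
  have h2 := CW_ge_six s
  rw [div_le_iff₀ (by nlinarith)]
  nlinarith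

lemma ptU (hε0 : 0 < ε) (hε1 : ε ≤ 1) (x : ℝ) : ‖Ker s ε x‖ ≤ DU s / ε := by
  have := Ker_norm_le s ε hε0 hε1 x
  unfold DU
  calc ‖Ker s ε x‖ ≤ CA s * 6 / ε := this
  _ = _ := by ring

lemma ptV (hs : 1 ≤ s) (hε0 : 0 < ε) (hε1 : ε ≤ 1) (x : ℝ) (hx0 : x ≠ 0) (hxπ : |x| ≤ Real.pi) :
    ‖Ker s ε x‖ ≤ DV s * ε / x^2 := by
  have hq : 4/Real.pi^2 * x^2 ≤ 2 - 2*Real.cos x := by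
    have h := Real.cos_le_one_sub_mul_cos_sq hxπ
    have h2 : 2 * Real.cos x ≤ 2 * (1 - 2 / Real.pi^2 * x^2) :=
      mul_le_mul_of_nonneg_left h (by norm_num)
    have h3 : 2 * (1 - 2 / Real.pi^2 * x^2) = 2 - 4 / Real.pi^2 * x^2 := by ring
    linarith [h2, h3.le]
  have hx2 : 0 < x^2 := by positivity
  have hqpos : 0 < 4/Real.pi^2 * x^2 := by
    have := Real.pi_pos
    positivity
  have hd := Ker_decay s ε hs hε0 hε1 x
  have h1 : ‖Ker s ε x‖ * (4/Real.pi^2 * x^2) ≤ 12 * (C2 (2*s-2) * Real.exp 1) * ε := by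
    calc ‖Ker s ε x‖ * (4/Real.pi^2 * x^2) ≤ ‖Ker s ε x‖ * (2 - 2*Real.cos x) :=
          mul_le_mul_of_nonneg_left hq (norm_nonneg _)
    _ = (2 - 2*Real.cos x) * ‖Ker s ε x‖ := by ring
    _ ≤ _ := hd
  rw [← le_div_iff₀ hqpos] at h1
  refine h1.trans (le_of_eq ?_)
  unfold DV
  have hπ : Real.pi ≠ 0 := Real.pi_ne_zero
  field_simp
  ring

lemma ptL (hs : 1 ≤ s) (hε0 : 0 < ε) (hε1 : ε ≤ 1) (x : ℝ) (hx : |x| ≤ del s * ε) :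
    Real.exp (-9) / (2*ε) ≤ ‖Ker s ε x‖ := by
  have h1 := Ker_re_ge s ε hε0 hε1 x
  have h2 := tsum_coefA_ge s ε hs hε0 hε1
  have hCW := CW_pos s
  have h3 : |x| * (CW s / ε^2) ≤ Real.exp (-9) / (2*ε) := by
    have hb : del s * ε * (CW s / ε^2) = Real.exp (-9) / (2*ε) := by
      unfold del
      field_simp
    calc |x| * (CW s / ε^2) ≤ del s * ε * (CW s / ε^2) := by
          apply mul_le_mul_of_nonneg_right hx
          positivity
    _ = _ := hb
  have h4 : Real.exp (-9)/ε - Real.exp (-9)/(2*ε) = Real.exp (-9)/(2*ε) := by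
    field_simp
    ring
  linarith

end PtBounds

section IntegralBounds


variable (s : ℕ) (ε : ℝ)

lemma Ker_even (x : ℝ) : Ker s ε (-x) = Ker s ε x := by
  unfold Ker
  have := (Equiv.neg ℤ).tsum_eq
    (f := fun k : ℤ => (coefA s ε k : ℂ) * Complex.exp ((((k : ℝ) * x : ℝ)) * Complex.I))
  rw [← this]
  congr 1; funext k
  have hc : coefA s ε (-k) = coefA s ε k := by
    unfold coefA
    push_cast
    ring_nf
  simp only [Equiv.neg_apply, hc]
  congr 2
  push_cast
  ring

noncomputable def cLow (s : ℕ) (p : ℝ) : ℝ := 2 * del s * (Real.exp (-9)/2) ^ p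
noncomputable def CUp (s : ℕ) (p : ℝ) : ℝ := 2 * (DU s) ^ p + 2 * (DV s) ^ p

lemma cLow_pos (p : ℝ) : 0 < cLow s p := by
  unfold cLow
  have := del_pos s
  positivity

lemma CUp_pos (p : ℝ) : 0 < CUp s p := by
  unfold CUp
  have := DU_pos s
  have := DV_pos s
  positivity

set_option maxHeartbeats 800000 in
lemma Ker_integral_bounds (hs : 1 ≤ s) (hε0 : 0 < ε) (hε1 : ε ≤ 1) (p : ℝ) (hp : 1 ≤ p) :
    cLow s p * ε ^ ((1:ℝ) - p) ≤ (∫ x in (-Real.pi)..Real.pi, ‖Ker s ε x‖ ^ p) ∧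
    (∫ x in (-Real.pi)..Real.pi, ‖Ker s ε x‖ ^ p) ≤ CUp s p * ε ^ ((1:ℝ) - p) := by
  have hp0 : (0:ℝ) ≤ p := by linarith
  have hπ := Real.pi_gt_three
  set φ : ℝ → ℝ := fun x => ‖Ker s ε x‖ ^ p with hφ
  have hcont : Continuous φ := by
    apply Continuous.rpow_const ((Ker_continuous s ε hε0 hε1).norm)
    intro x; right; exact hp0
  have hInt : ∀ a b : ℝ, IntervalIntegrable φ MeasureTheory.volume a b := fun a b =>
    hcont.intervalIntegrable a b
  have hφ0 : ∀ x, 0 ≤ φ x := fun x => Real.rpow_nonneg (norm_nonneg _) p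
  have hφeven : ∀ x, φ (-x) = φ x := by
    intro x; simp only [hφ, Ker_even]
  -- upper pieces
  have hmid : (∫ x in (-ε)..ε, φ x) ≤ 2 * (DU s) ^ p * ε ^ ((1:ℝ) - p) := by
    have h1 : (∫ x in (-ε)..ε, φ x) ≤ ∫ x in (-ε)..ε, (DU s / ε) ^ p := by
      apply intervalIntegral.integral_mono_on (by linarith) (hInt _ _) intervalIntegrable_const
      intro x _
      exact Real.rpow_le_rpow (norm_nonneg _) (ptU s ε hε0 hε1 x) hp0
    rw [intervalIntegral.integral_const] at h1
    refine h1.trans (le_of_eq ?_)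
    rw [smul_eq_mul, Real.div_rpow (DU_pos s).le hε0.le,
      Real.rpow_sub hε0, Real.rpow_one]
    field_simp
    ring
  have hright : (∫ x in ε..π, φ x) ≤ (DV s) ^ p * ε ^ ((1:ℝ) - p) := by
    have hεπ : ε ≤ π := by linarith
    have h1 : (∫ x in ε..π, φ x) ≤ ∫ x in ε..π, (DV s * ε) ^ p * x ^ (-(2*p)) := by
      apply intervalIntegral.integral_mono_on hεπ (hInt _ _)
      · apply ContinuousOn.intervalIntegrable
        apply ContinuousOn.mul continuousOn_const
        apply ContinuousOn.rpow_const continuousOn_id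
        intro x hx
        rw [Set.uIcc_of_le hεπ] at hx
        left
        simp only [id]
        exact (lt_of_lt_of_le hε0 hx.1).ne'
      · intro x hx
        have hx0 : 0 < x := lt_of_lt_of_le hε0 hx.1
        have hxb : ‖Ker s ε x‖ ≤ DV s * ε / x^2 :=
          ptV s ε hs hε0 hε1 x hx0.ne' (by rw [abs_of_pos hx0]; exact hx.2)
        have hx2 : ((x ^ (2:ℕ) : ℝ)) ^ p = x ^ (2*p) := by
          rw [← Real.rpow_natCast x 2, ← Real.rpow_mul hx0.le]
          norm_num
        have h2 : (DV s * ε / x^2) ^ p = (DV s * ε) ^ p * x ^ (-(2*p)) := by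
          rw [Real.div_rpow (mul_nonneg (DV_pos s).le hε0.le) (by positivity), hx2,
            Real.rpow_neg hx0.le, div_eq_mul_inv]
        rw [← h2]
        exact Real.rpow_le_rpow (norm_nonneg _) hxb hp0
    have hne : -(2*p) ≠ -1 := by
      intro hcon
      have hcp : p = 1/2 := by linarith
      linarith
    have hnm : (0:ℝ) ∉ Set.uIcc ε π := by
      rw [Set.uIcc_of_le hεπ]
      intro hcon
      exact absurd hcon.1 (by linarith)
    rw [intervalIntegral.integral_const_mul, integral_rpow (Or.inr ⟨hne, hnm⟩)] at h1
    refine h1.trans ?_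
    have hA : (0:ℝ) ≤ ε ^ (-(2*p) + 1) := Real.rpow_nonneg hε0.le _
    have hBv : (0:ℝ) ≤ π ^ (-(2*p) + 1) := Real.rpow_nonneg (by linarith) _
    have hkey : (π ^ (-(2*p) + 1) - ε ^ (-(2*p) + 1)) / (-(2*p) + 1) ≤ ε ^ (-(2*p) + 1) := by
      rw [div_le_iff_of_neg (by linarith)]
      nlinarith
    calc (DV s * ε) ^ p * ((π ^ (-(2*p) + 1) - ε ^ (-(2*p) + 1)) / (-(2*p) + 1))
        ≤ (DV s * ε) ^ p * ε ^ (-(2*p) + 1) :=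
          mul_le_mul_of_nonneg_left hkey (Real.rpow_nonneg (mul_nonneg (DV_pos s).le hε0.le) _)
    _ = (DV s) ^ p * ε ^ ((1:ℝ) - p) := by
        rw [Real.mul_rpow (DV_pos s).le hε0.le, mul_assoc, ← Real.rpow_add hε0]
        congr 2
        ring
  have hleft : (∫ x in (-π)..(-ε), φ x) = ∫ x in ε..π, φ x := by
    have h1 : (∫ x in ε..π, φ (-x)) = ∫ x in (-π)..(-ε), φ x := by
      simpa using intervalIntegral.integral_comp_neg (a := ε) (b := π) φ
    rw [← h1]
    apply intervalIntegral.integral_congr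
    intro x _
    exact hφeven x
  have hsplit : (∫ x in (-π)..π, φ x)
      = (∫ x in (-π)..(-ε), φ x) + (∫ x in (-ε)..ε, φ x) + (∫ x in ε..π, φ x) := by
    rw [intervalIntegral.integral_add_adjacent_intervals (hInt _ _) (hInt _ _),
      intervalIntegral.integral_add_adjacent_intervals (hInt _ _) (hInt _ _)]
  constructor
  · -- lower bound
    set d := del s * ε with hd
    have hd0 : 0 < d := mul_pos (del_pos s) hε0
    have hdπ : d ≤ π := by
      have := del_le s
      have : d ≤ 12⁻¹ * 1 := by
        rw [hd]
        apply mul_le_mul (del_le s) hε1 hε0.le (by norm_num)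
      linarith
    have hmono : (∫ x in (-d)..d, (Real.exp (-9) / (2*ε)) ^ p) ≤ ∫ x in (-d)..d, φ x := by
      apply intervalIntegral.integral_mono_on (by linarith) intervalIntegrable_const (hInt _ _)
      intro x hx
      apply Real.rpow_le_rpow (by positivity) _ hp0
      apply ptL s ε hs hε0 hε1
      rw [abs_le]
      exact ⟨by linarith [hx.1], by linarith [hx.2]⟩
    have hsplit2 : (∫ x in (-π)..π, φ x)
        = (∫ x in (-π)..(-d), φ x) + (∫ x in (-d)..d, φ x) + (∫ x in d..π, φ x) := by
      rw [intervalIntegral.integral_add_adjacent_intervals (hInt _ _) (hInt _ _),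
        intervalIntegral.integral_add_adjacent_intervals (hInt _ _) (hInt _ _)]
    have hnn1 : 0 ≤ ∫ x in (-π)..(-d), φ x :=
      intervalIntegral.integral_nonneg (by linarith) (fun x _ => hφ0 x)
    have hnn2 : 0 ≤ ∫ x in d..π, φ x :=
      intervalIntegral.integral_nonneg (by linarith) (fun x _ => hφ0 x)
    have hconst : (∫ x in (-d)..d, (Real.exp (-9) / (2*ε)) ^ p)
        = cLow s p * ε ^ ((1:ℝ) - p) := by
      rw [intervalIntegral.integral_const, smul_eq_mul]
      have he : (Real.exp (-9) / (2*ε)) ^ p = (Real.exp (-9)/2) ^ p * ε ^ (-p) := by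
        rw [show Real.exp (-9) / (2*ε) = (Real.exp (-9)/2) * ε⁻¹ by field_simp,
          Real.mul_rpow (by positivity) (by positivity), ← Real.rpow_neg_one ε,
          ← Real.rpow_mul hε0.le]
        norm_num
      rw [he, hd]
      unfold cLow
      rw [Real.rpow_sub hε0, Real.rpow_one]
      have hεp : ε ^ (-p) = (ε ^ p)⁻¹ := by
        rw [Real.rpow_neg hε0.le]
      rw [hεp]
      field_simp
      ring
    rw [hsplit2]
    rw [hconst] at hmono
    linarith
  · -- upper bound
    rw [hsplit, hleft]
    have : CUp s p * ε ^ ((1:ℝ) - p)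
        = (DV s)^p * ε ^ ((1:ℝ)-p) + 2*(DU s)^p * ε ^ ((1:ℝ)-p) + (DV s)^p * ε ^ ((1:ℝ)-p) := by
      unfold CUp
      ring
    rw [this]
    exact add_le_add (add_le_add hright hmid) hright

end IntegralBounds

end NeedletAux

instance : rho.IsAddRightInvariant := by
  unfold rho; infer_instance

/-- `L^p` norm bounds for Mexican needlets.  Assume the partition satisfies
`Q_j ≍ η^{-1}B^j` and `λ_{jq} ≍ ηB^{-j}` for `j ≥ 0` (with comparability constants `c₁ ≤ C₁`).
Then for every `p ≥ 1` there are `c̃_p, C̃_p > 0` (depending on `p, s, B` and the comparability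
constants) such that for all `j ≥ 0` and all `q < Q_j`,
`c̃_p B^{j(p/2−1)} η^{p/2} ≤ ‖ψ_{jq;s}‖_{L^p(S¹)}^p ≤ C̃_p η^{p/2} B^{j(p/2−1)}`. -/
theorem needlet_Lp_norm_bounds (s : ℕ) (hs : 1 ≤ s) (B η c₁ C₁ : ℝ)
    (hB : 1 < B) (hη : 0 < η) (hc₁ : 0 < c₁) (hC₁ : 0 < C₁)
    (Q : ℤ → ℕ) (lam : ℤ → ℕ → ℝ) (xc : ℤ → ℕ → S1)
    (hQ : ∀ j : ℤ, 0 ≤ j → c₁ * η⁻¹ * B ^ j ≤ (Q j : ℝ) ∧ (Q j : ℝ) ≤ C₁ * η⁻¹ * B ^ j)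
    (hlam : ∀ j : ℤ, 0 ≤ j → ∀ q < Q j,
      c₁ * η * B ^ (-j) ≤ lam j q ∧ lam j q ≤ C₁ * η * B ^ (-j)) :
    ∀ p : ℝ, 1 ≤ p → ∃ ctil Ctil : ℝ, 0 < ctil ∧ 0 < Ctil ∧
      ∀ j : ℤ, 0 ≤ j → ∀ q < Q j,
        ctil * B ^ ((j : ℝ) * (p / 2 - 1)) * η ^ (p / 2) ≤
            (∫ θ, ‖needlet B s j (lam j q) (xc j q) θ‖ ^ p ∂rho) ∧
          (∫ θ, ‖needlet B s j (lam j q) (xc j q) θ‖ ^ p ∂rho) ≤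
            Ctil * η ^ (p / 2) * B ^ ((j : ℝ) * (p / 2 - 1)) := by
  intro p hp
  have hB0 : (0:ℝ) < B := by linarith
  have hπ := Real.pi_gt_three
  refine ⟨(2*Real.pi)⁻¹ * c₁ ^ (p/2) * NeedletAux.cLow s p,
    (2*Real.pi)⁻¹ * C₁ ^ (p/2) * NeedletAux.CUp s p, ?_, ?_, ?_⟩
  · have := NeedletAux.cLow_pos s p
    positivity
  · have := NeedletAux.CUp_pos s p
    positivity
  intro j hj q hq
  set ε : ℝ := B ^ (-j) with hε
  have hε0 : 0 < ε := zpow_pos hB0 _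
  have hε1 : ε ≤ 1 := zpow_le_one_of_nonpos₀ hB.le (by linarith)
  obtain ⟨hlam1, hlam2⟩ := hlam j hj q hq
  have hlam0 : 0 < lam j q := lt_of_lt_of_le (by positivity) hlam1
  set lamv := lam j q with hlamv
  set xcv := xc j q with hxcv
  -- the kernel on the circle
  set KS : S1 → ℂ := fun θ => ∑' k : ℤ, (NeedletAux.coefA s ε k : ℂ) * fourier k θ with hKS
  set G : S1 → ℝ := fun θ => ‖(Real.sqrt lamv : ℂ) * KS θ‖ ^ p with hG
  -- Step A+B : translation invariance
  have hI1 : (∫ θ, ‖needlet B s j lamv xcv θ‖ ^ p ∂rho) = ∫ θ, G θ ∂rho := by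
    have h0 : (∫ θ, ‖needlet B s j lamv xcv θ‖ ^ p ∂rho) = ∫ θ, G (θ - xcv) ∂rho := rfl
    rw [h0]
    exact MeasureTheory.integral_sub_right_eq_self G xcv
  -- Step C : unfold to an interval integral
  have hI2 : (∫ θ, G θ ∂rho) = (2*Real.pi)⁻¹ * ∫ x in Set.Ioc (-Real.pi) Real.pi, G ↑x := by
    have h1 : (volume : Measure S1) = ENNReal.ofReal (2*Real.pi) • AddCircle.haarAddCircle :=
      AddCircle.volume_eq_smul_haarAddCircle
    have h2 := AddCircle.integral_preimage (2*Real.pi) (-Real.pi) G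
    rw [show -Real.pi + 2*Real.pi = Real.pi by ring] at h2
    rw [rho, h2, h1, MeasureTheory.integral_smul_measure,
      ENNReal.toReal_ofReal (by positivity), smul_eq_mul, ← mul_assoc,
      inv_mul_cancel₀ (by positivity), one_mul]
  -- Step D : the integrand on representatives
  have hGx : ∀ x : ℝ, G ↑x = lamv ^ (p/2) * ‖NeedletAux.Ker s ε x‖ ^ p := by
    intro x
    have hKx : KS ↑x = NeedletAux.Ker s ε x := by
      simp only [hKS, NeedletAux.Ker]
      congr 1; funext k
      congr 1
      rw [fourier_coe_apply]
      congr 1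
      push_cast
      have hπ0 : (Real.pi : ℂ) ≠ 0 := by exact_mod_cast Real.pi_ne_zero
      field_simp
    rw [hG]
    simp only [hKx]
    rw [norm_mul, Complex.norm_real, Real.norm_eq_abs, abs_of_nonneg (Real.sqrt_nonneg _),
      Real.mul_rpow (Real.sqrt_nonneg _) (norm_nonneg _)]
    congr 1
    rw [Real.sqrt_eq_rpow, ← Real.rpow_mul hlam0.le]
    congr 1
    ring
  have hI3 : (∫ x in Set.Ioc (-Real.pi) Real.pi, G ↑x)
      = lamv ^ (p/2) * ∫ x in (-Real.pi)..Real.pi, ‖NeedletAux.Ker s ε x‖ ^ p := by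
    rw [intervalIntegral.integral_of_le (by linarith : -Real.pi ≤ Real.pi)]
    rw [show (fun x : ℝ => G ↑x) = fun x : ℝ => lamv ^ (p/2) * ‖NeedletAux.Ker s ε x‖ ^ p from
      funext hGx]
    exact MeasureTheory.integral_const_mul _ _
  obtain ⟨hJl, hJu⟩ := NeedletAux.Ker_integral_bounds s ε hs hε0 hε1 p hp
  set J := ∫ x in (-Real.pi)..Real.pi, ‖NeedletAux.Ker s ε x‖ ^ p with hJ
  have hJ0 : 0 ≤ J := le_trans (le_of_lt (mul_pos (NeedletAux.cLow_pos s p)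
    (Real.rpow_pos_of_pos hε0 _))) hJl
  have hkey : (∫ θ, ‖needlet B s j lamv xcv θ‖ ^ p ∂rho) = (2*Real.pi)⁻¹ * (lamv ^ (p/2) * J) := by
    rw [hI1, hI2, hI3]
  -- exponent arithmetic
  have hεpow : ε ^ (p/2) * ε ^ ((1:ℝ) - p) = B ^ ((j:ℝ) * (p/2 - 1)) := by
    rw [← Real.rpow_add hε0]
    have h1 : ε = B ^ ((-j : ℤ) : ℝ) := (Real.rpow_intCast B (-j)).symm ▸ rfl
    rw [h1, ← Real.rpow_mul hB0.le]
    congr 1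
    push_cast
    ring
  have hrp2 : (0:ℝ) ≤ p/2 := by linarith
  constructor
  · -- lower bound
    have hl1 : (c₁ * η * ε) ^ (p/2) ≤ lamv ^ (p/2) :=
      Real.rpow_le_rpow (by positivity) hlam1 hrp2
    have hl2 : (c₁ * η * ε) ^ (p/2) * (NeedletAux.cLow s p * ε ^ ((1:ℝ) - p))
        ≤ lamv ^ (p/2) * J := by
      apply mul_le_mul hl1 hJl (by
        have := NeedletAux.cLow_pos s p
        positivity) (Real.rpow_nonneg hlam0.le _)
    have heq : (2*Real.pi)⁻¹ * ((c₁ * η * ε) ^ (p/2) * (NeedletAux.cLow s p * ε ^ ((1:ℝ) - p)))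
        = (2*Real.pi)⁻¹ * c₁ ^ (p/2) * NeedletAux.cLow s p * B ^ ((j:ℝ) * (p/2 - 1)) * η ^ (p/2) := by
      rw [Real.mul_rpow (by positivity : (0:ℝ) ≤ c₁ * η) hε0.le,
        Real.mul_rpow hc₁.le hη.le, ← hεpow]
      ring
    rw [hkey]
    calc (2*Real.pi)⁻¹ * c₁ ^ (p/2) * NeedletAux.cLow s p * B ^ ((j:ℝ) * (p/2 - 1)) * η ^ (p/2)
        = (2*Real.pi)⁻¹ * ((c₁ * η * ε) ^ (p/2) * (NeedletAux.cLow s p * ε ^ ((1:ℝ) - p))) :=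
          heq.symm
    _ ≤ (2*Real.pi)⁻¹ * (lamv ^ (p/2) * J) := by
        apply mul_le_mul_of_nonneg_left hl2 (by positivity)
  · -- upper bound
    have hu1 : lamv ^ (p/2) ≤ (C₁ * η * ε) ^ (p/2) :=
      Real.rpow_le_rpow hlam0.le hlam2 hrp2
    have hu2 : lamv ^ (p/2) * J ≤ (C₁ * η * ε) ^ (p/2) * (NeedletAux.CUp s p * ε ^ ((1:ℝ) - p)) := by
      apply mul_le_mul hu1 hJu hJ0 (Real.rpow_nonneg (by positivity) _)
    have heq : (2*Real.pi)⁻¹ * ((C₁ * η * ε) ^ (p/2) * (NeedletAux.CUp s p * ε ^ ((1:ℝ) - p)))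
        = (2*Real.pi)⁻¹ * C₁ ^ (p/2) * NeedletAux.CUp s p * η ^ (p/2) * B ^ ((j:ℝ) * (p/2 - 1)) := by
      rw [Real.mul_rpow (by positivity : (0:ℝ) ≤ C₁ * η) hε0.le,
        Real.mul_rpow hC₁.le hη.le, ← hεpow]
      ring
    rw [hkey]
    calc (2*Real.pi)⁻¹ * (lamv ^ (p/2) * J)
        ≤ (2*Real.pi)⁻¹ * ((C₁ * η * ε) ^ (p/2) * (NeedletAux.CUp s p * ε ^ ((1:ℝ) - p))) := by
          apply mul_le_mul_of_nonneg_left hu2 (by positivity)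
    _ = (2*Real.pi)⁻¹ * C₁ ^ (p/2) * NeedletAux.CUp s p * η ^ (p/2) * B ^ ((j:ℝ) * (p/2 - 1)) :=
          heq
    _ = _ := by ring
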